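/- Let a > 0, let σ: ℝ → [0, ∞) be an even function that is nonincreasing on [0, ∞), and let g: ℝ → [0, ∞) be integrable on [-a, a]. Then ∫_{-a}^{a} σ(s) * |∫_{0}^{s} g(t) dt| ds ≤ 2a * ∫_{-a}^{a} σ(t) g(t) dt. -/

import Mathlib

set_option maxHeartbeats 800000

open intervalIntegral

/-- Let `a > 0`, let `σ : ℝ → [0,∞)` be even and nonincreasing on `[0,∞)`, and let
`g : ℝ → [0,∞)` be integrable on `[-a, a]`. Then
`∫_{-a}^{a} σ(s) |∫_0^s g(t) dt| ds ≤ 2a ∫_{-a}^{a} σ(t) g(t) dt`. -/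
theorem stmt_13 (a : ℝ) (ha : 0 < a) (σ g : ℝ → ℝ)
    (hσ0 : ∀ s, 0 ≤ σ s) (hσeven : ∀ s, σ (-s) = σ s)
    (hσanti : AntitoneOn σ (Set.Ici (0:ℝ)))
    (hg0 : ∀ t, 0 ≤ g t)
    (hgint : MeasureTheory.IntegrableOn g (Set.Icc (-a) a)) :
    ∫ s in (-a)..a, σ s * |∫ t in (0:ℝ)..s, g t| ≤
      2 * a * ∫ t in (-a)..a, σ t * g t := by
  have haa : (-a) ≤ a := by linarith
  -- σ is measurable
  have habs : ∀ t, σ t = σ |t| := by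
    intro t
    rcases le_total 0 t with h | h
    · rw [abs_of_nonneg h]
    · rw [abs_of_nonpos h, hσeven]
  have hτ : Antitone (fun t => σ (max t 0)) := by
    intro x y hxy
    exact hσanti (le_max_right x 0) (le_max_right y 0) (max_le_max hxy le_rfl)
  have hσmeas : Measurable σ := by
    have : σ = (fun t => σ (max t 0)) ∘ (fun t => |t|) := by
      funext t
      simp only [Function.comp_apply, max_eq_left (abs_nonneg t)]
      exact habs t
    rw [this]
    exact hτ.measurable.comp measurable_abs
  have hσbd : ∀ t, σ t ≤ σ 0 := by
    intro t
    rw [habs t]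
    exact hσanti (Set.mem_Ici.mpr le_rfl) (Set.mem_Ici.mpr (abs_nonneg t)) (abs_nonneg t)
  -- integrability of σ * g on [-a, a]
  have hσgint : MeasureTheory.IntegrableOn (fun t => σ t * g t) (Set.Icc (-a) a) := by
    refine hgint.bdd_mul (hσmeas.aestronglyMeasurable.restrict) (c := σ 0) (Filter.Eventually.of_forall fun x => ?_)
    rw [Real.norm_eq_abs, abs_of_nonneg (hσ0 x)]
    exact hσbd x
  have key : ∀ u v : ℝ, Set.uIcc u v ⊆ Set.Icc (-a) a →
      IntervalIntegrable (fun t => σ t * g t) MeasureTheory.volume u v :=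
    by
    intro u v h
    rw [intervalIntegrable_iff]
    exact hσgint.mono_set (Set.uIoc_subset_uIcc.trans h)
  have keyg : ∀ u v : ℝ, Set.uIcc u v ⊆ Set.Icc (-a) a →
      IntervalIntegrable g MeasureTheory.volume u v :=
    by
    intro u v h
    rw [intervalIntegrable_iff]
    exact hgint.mono_set (Set.uIoc_subset_uIcc.trans h)
  set I := ∫ t in (-a)..a, σ t * g t with hI
  -- pointwise bound
  have hpt : ∀ s ∈ Set.Icc (-a) a, σ s * |∫ t in (0:ℝ)..s, g t| ≤ I := by
    intro s hs
    obtain ⟨hs1, hs2⟩ := hs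
    rcases le_total 0 s with h0s | hs0
    · have hsub : Set.uIcc (0:ℝ) s ⊆ Set.Icc (-a) a := by
        rw [Set.uIcc_of_le h0s]
        exact Set.Icc_subset_Icc (by linarith) hs2
      have hgi := keyg 0 s hsub
      have habs' : |∫ t in (0:ℝ)..s, g t| = ∫ t in (0:ℝ)..s, g t :=
        abs_of_nonneg (intervalIntegral.integral_nonneg h0s (fun u _ => hg0 u))
      rw [habs', ← intervalIntegral.integral_const_mul]
      calc ∫ t in (0:ℝ)..s, σ s * g t ≤ ∫ t in (0:ℝ)..s, σ t * g t := by
            apply intervalIntegral.integral_mono_on h0s (hgi.const_mul _) (key 0 s hsub)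
            intro x ⟨hx1, hx2⟩
            exact mul_le_mul_of_nonneg_right
              (hσanti (Set.mem_Ici.mpr hx1) (Set.mem_Ici.mpr h0s) hx2) (hg0 x)
        _ ≤ I := by
            apply intervalIntegral.integral_mono_interval (by linarith) h0s hs2
              (Filter.Eventually.of_forall fun x => mul_nonneg (hσ0 x) (hg0 x))
              (key (-a) a (by rw [Set.uIcc_of_le haa]))
    · have hsub : Set.uIcc s (0:ℝ) ⊆ Set.Icc (-a) a := by
        rw [Set.uIcc_of_le hs0]
        exact Set.Icc_subset_Icc hs1 (by linarith)
      have hgi := keyg s 0 hsub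
      have habs' : |∫ t in (0:ℝ)..s, g t| = ∫ t in s..(0:ℝ), g t := by
        rw [intervalIntegral.integral_symm, abs_neg]
        exact abs_of_nonneg (intervalIntegral.integral_nonneg hs0 (fun u _ => hg0 u))
      rw [habs', ← intervalIntegral.integral_const_mul]
      calc ∫ t in s..(0:ℝ), σ s * g t ≤ ∫ t in s..(0:ℝ), σ t * g t := by
            apply intervalIntegral.integral_mono_on hs0 (hgi.const_mul _) (key s 0 hsub)
            intro x ⟨hx1, hx2⟩
            have : σ s ≤ σ x := by
              rw [← hσeven s, ← hσeven x]
              exact hσanti (by simpa using hx2) (by simpa using hs0) (by linarith)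
            exact mul_le_mul_of_nonneg_right this (hg0 x)
        _ ≤ I := by
            apply intervalIntegral.integral_mono_interval hs1 hs0 (by linarith)
              (Filter.Eventually.of_forall fun x => mul_nonneg (hσ0 x) (hg0 x))
              (key (-a) a (by rw [Set.uIcc_of_le haa]))
  -- integrability of LHS integrand
  have hFcont : ContinuousOn (fun s => ∫ t in (0:ℝ)..s, g t) (Set.Icc (-a) a) := by
    have h1 : IntervalIntegrable g MeasureTheory.volume (-a) a :=
      keyg (-a) a (by rw [Set.uIcc_of_le haa])
    have h2 : (0:ℝ) ∈ Set.uIcc (-a) a :=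
      Set.mem_uIcc.mpr (Or.inl ⟨by linarith, by linarith⟩)
    have := intervalIntegral.continuousOn_primitive_interval' h1 h2
    rwa [Set.uIcc_of_le haa] at this
  have hLHSint : MeasureTheory.IntegrableOn
      (fun s => σ s * |∫ t in (0:ℝ)..s, g t|) (Set.Icc (-a) a) := by
    refine MeasureTheory.Integrable.bdd_mul ?_ (hσmeas.aestronglyMeasurable.restrict)
      (c := σ 0) (Filter.Eventually.of_forall fun x => ?_)
    · exact (hFcont.abs.integrableOn_Icc)
    · rw [Real.norm_eq_abs, abs_of_nonneg (hσ0 x)]; exact hσbd x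
  calc ∫ s in (-a)..a, σ s * |∫ t in (0:ℝ)..s, g t|
      ≤ ∫ _ in (-a)..a, I := by
        exact intervalIntegral.integral_mono_on haa
          (by
            rw [intervalIntegrable_iff]
            exact hLHSint.mono_set (by rw [Set.uIoc_of_le haa]; exact Set.Ioc_subset_Icc_self))
          intervalIntegrable_const hpt
    _ = 2 * a * I := by
        rw [intervalIntegral.integral_const, smul_eq_mul]; ring
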